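/- arXiv:1311.0459 — 3 statements merged into one kernel-verified Lean document; each statement's English description precedes it below -/
import Mathlib

section
/- (Theorem 1) Consider λ independent transmission attempts of the same packet to a user, modeled on the product probability space (Fin λ → Bool × Bool) where each coordinate carries the product of two independent Bernoulli measures: the packet is received with probability 1−p and the feedback channel succeeds with probability 1−q, with p, q ∈ [0,1], and the base station hears feedback on an attempt iff both are true. If p + (1−p)q > 0, then the conditional probability that the packet was received in none of the λ attempts, given that the base station heard no feedback on any of the λ attempts, equals (p / (p + (1−p)q))^λ. In particular, the probability that the packet is still innovative (i.e., still not received) to the user after λ unacknowledged attempts is (p / (p + (1−p)q))^λ. -/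
open MeasureTheory ProbabilityTheory
open scoped ENNReal NNReal

/-- The Bernoulli PMF with an `ℝ≥0∞` parameter, as `PMF.bernoulli` was defined in the older Mathlib. -/
noncomputable def bernoulliPMF (p : ℝ≥0∞) (h : p ≤ 1) : PMF Bool :=
  PMF.ofFintype (fun b => bif b then p else 1 - p) (by simp [h])

/-- Theorem 1: after `lam` independent unacknowledged transmission attempts, the
conditional probability that the packet was never received, given that no feedback
was heard on any attempt, equals `(p / (p + (1 - p) * q)) ^ lam`. Each attempt lives
on `Bool × Bool`: the packet is received with probability `1 - p`, the feedback
channel succeeds with probability `1 - q`, and feedback is heard iff both hold. -/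
theorem cond_never_received_given_no_feedback_pow
    (p q : ℝ≥0∞) (hp : p ≤ 1) (hq : q ≤ 1) (lam : ℕ)
    (hpos : 0 < p + (1 - p) * q) :
    ((Measure.pi (fun _ : Fin lam =>
        (bernoulliPMF (1 - p) tsub_le_self).toMeasure.prod
          (bernoulliPMF (1 - q) tsub_le_self).toMeasure))[|{ω : Fin lam → Bool × Bool | ∀ i, ¬((ω i).1 = true ∧ (ω i).2 = true)}])
      {ω : Fin lam → Bool × Bool | ∀ i, (ω i).1 = false}
      = (p / (p + (1 - p) * q)) ^ lam := by
  classical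
  set μp := (bernoulliPMF (1 - p) tsub_le_self).toMeasure with hμpdef
  set μq := (bernoulliPMF (1 - q) tsub_le_self).toMeasure with hμqdef
  set ν := μp.prod μq with hνdef
  set A : Set (Bool × Bool) := {x | ¬(x.1 = true ∧ x.2 = true)} with hAdef
  set B : Set (Bool × Bool) := {x | x.1 = false} with hBdef
  -- single coordinate measures
  have h1p : (1 : ℝ≥0∞) - (1 - p) = p := ENNReal.sub_sub_cancel ENNReal.one_ne_top hp
  have h1q : (1 : ℝ≥0∞) - (1 - q) = q := ENNReal.sub_sub_cancel ENNReal.one_ne_top hq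
  have hμp_false : μp {false} = p := by
    rw [hμpdef, PMF.toMeasure_apply_singleton _ _ (measurableSet_singleton _),
      bernoulliPMF, PMF.ofFintype_apply]
    simpa using h1p
  have hμp_true : μp {true} = 1 - p := by
    rw [hμpdef, PMF.toMeasure_apply_singleton _ _ (measurableSet_singleton _),
      bernoulliPMF, PMF.ofFintype_apply]
    rfl
  have hμq_false : μq {false} = q := by
    rw [hμqdef, PMF.toMeasure_apply_singleton _ _ (measurableSet_singleton _),
      bernoulliPMF, PMF.ofFintype_apply]
    simpa using h1q
  have hνA : ν A = p + (1 - p) * q := by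
    have hsplit : A = ({false} ×ˢ (Set.univ : Set Bool)) ∪ ({true} ×ˢ {false}) := by
      ext ⟨a, b⟩
      cases a <;> cases b <;> simp [hAdef]
    rw [hsplit, measure_union, Measure.prod_prod, Measure.prod_prod, hμp_false, hμp_true,
      hμq_false, measure_univ, mul_one]
    · exact Set.disjoint_left.2 (by rintro ⟨a, b⟩ ⟨ha, -⟩ ⟨ha', -⟩; simp_all)
    · exact (measurableSet_singleton _).prod (measurableSet_singleton _)
  have hνB : ν B = p := by
    have hB' : B = ({false} ×ˢ (Set.univ : Set Bool)) := by
      ext ⟨a, b⟩; simp [hBdef]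
    rw [hB', Measure.prod_prod, hμp_false, measure_univ, mul_one]
  -- big sets as pi sets
  have hsetA : {ω : Fin lam → Bool × Bool | ∀ i, ¬((ω i).1 = true ∧ (ω i).2 = true)}
      = Set.pi Set.univ (fun _ : Fin lam => A) := by
    ext ω; simp [Set.mem_pi, hAdef]
  have hsetB : {ω : Fin lam → Bool × Bool | ∀ i, (ω i).1 = false}
      = Set.pi Set.univ (fun _ : Fin lam => B) := by
    ext ω; simp [Set.mem_pi, hBdef]
  have hmeasA : MeasurableSet (Set.pi Set.univ (fun _ : Fin lam => A)) :=
    MeasurableSet.univ_pi fun _ => (Set.to_countable A).measurableSet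
  have hBsubA : Set.pi Set.univ (fun _ : Fin lam => B) ⊆ Set.pi Set.univ (fun _ : Fin lam => A) := by
    intro ω hω i hi
    have := hω i hi
    simp [hAdef, hBdef] at this ⊢
    simp [this]
  have hpiA : (Measure.pi (fun _ : Fin lam => ν)) (Set.pi Set.univ (fun _ : Fin lam => A))
      = (p + (1 - p) * q) ^ lam := by
    rw [Measure.pi_pi]
    simp [hνA]
  have hpiB : (Measure.pi (fun _ : Fin lam => ν)) (Set.pi Set.univ (fun _ : Fin lam => B))
      = p ^ lam := by
    rw [Measure.pi_pi]
    simp [hνB]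
  rw [hsetA, hsetB, cond_apply hmeasA,
    Set.inter_eq_self_of_subset_right hBsubA, hpiA, hpiB,
    div_eq_mul_inv, mul_pow, ENNReal.inv_pow, mul_comm]
end

section
/- Let p_i, p_k, f_i, f_k ∈ [0,1] and let a_{ij}, a_{il}, a_{kj}, a_{kl} ∈ [0,1] denote the probabilities that packets j and l are innovative to users i and k respectively. Define for any pair (x, y) of innovation probabilities of a user u ∈ {i,k} the expected delay contributions D_u(j⊕l) = (1−p_u)·(a_{uj}·a_{ul} + (1−a_{uj})·(1−a_{ul}))·f_u, D_u(j) = (1−p_u)·(1−a_{uj})·f_u, D_u(l) = (1−p_u)·(1−a_{ul})·f_u, and the two-user sums D(j⊕l) = D_i(j⊕l) + D_k(j⊕l), D(j) = D_i(j) + D_k(j), D(l) = D_i(l) + D_k(l). If a_{il} = 0 and a_{kj} = 0 (i.e., packet l is in the Has set of user i and packet j is in the Has set of user k), then D(j⊕l) ≤ min(D(j), D(l)). Consequently, every edge of the G-IDNC graph satisfies the LG-IDNC connectivity condition C2, so the G-IDNC graph is a subgraph of the LG-IDNC graph. -/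
/-- Every G-IDNC edge satisfies the LG-IDNC condition C2: if packet `l` is in the Has
set of user `i` (`ail = 0`) and packet `j` is in the Has set of user `k` (`akj = 0`),
then the expected two-user decoding delay of the coded packet `j ⊕ l` is at most the
minimum of the expected delays of the individual packets `j` and `l`. Hence the
G-IDNC graph is a subgraph of the LG-IDNC graph. -/
theorem gidnc_edge_satisfies_lgidnc_C2
    (pi pk fi fk aij ail akj akl : ℝ)
    (hpi : pi ∈ Set.Icc (0:ℝ) 1) (hpk : pk ∈ Set.Icc (0:ℝ) 1)
    (hfi : fi ∈ Set.Icc (0:ℝ) 1) (hfk : fk ∈ Set.Icc (0:ℝ) 1)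
    (haij : aij ∈ Set.Icc (0:ℝ) 1) (hail : ail ∈ Set.Icc (0:ℝ) 1)
    (hakj : akj ∈ Set.Icc (0:ℝ) 1) (hakl : akl ∈ Set.Icc (0:ℝ) 1)
    (hil : ail = 0) (hkj : akj = 0) :
    (1 - pi) * (aij * ail + (1 - aij) * (1 - ail)) * fi
        + (1 - pk) * (akj * akl + (1 - akj) * (1 - akl)) * fk
      ≤ min ((1 - pi) * (1 - aij) * fi + (1 - pk) * (1 - akj) * fk)
            ((1 - pi) * (1 - ail) * fi + (1 - pk) * (1 - akl) * fk) := by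
  obtain ⟨h1, h2⟩ := hpi; obtain ⟨h3, h4⟩ := hpk
  obtain ⟨h5, h6⟩ := hfi; obtain ⟨h7, h8⟩ := hfk
  obtain ⟨h9, h10⟩ := haij; obtain ⟨h13, h14⟩ := hakl
  subst hil hkj
  refine le_min ?_ ?_ <;> nlinarith [mul_nonneg (mul_nonneg (by linarith : (0:ℝ) ≤ 1 - pk) h13) h7, mul_nonneg (mul_nonneg (by linarith : (0:ℝ) ≤ 1 - pi) h9) h5]
end

section
/- Let p_i, p_k ∈ [0,1) and f_i, f_k ∈ (0,1], and let a_{ij}, a_{il}, a_{kj}, a_{kl} ∈ {0,1} be binary innovation indicators with a_{ij} = 1 and a_{kl} = 1 (user i wants packet j and user k wants packet l). Define D_u(j⊕l) = (1−p_u)·(a_{uj}·a_{ul} + (1−a_{uj})·(1−a_{ul}))·f_u, D_u(m) = (1−p_u)·(1−a_{um})·f_u for m ∈ {j,l} and u ∈ {i,k}, and D(κ) = D_i(κ) + D_k(κ). Then D(j⊕l) ≤ min(D(j), D(l)) holds if and only if a_{il} = 0 and a_{kj} = 0. In other words, in the perfect feedback case, where all innovation probabilities are 0 or 1, the LG-IDNC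 connectivity condition C2 coincides with the G-IDNC connectivity condition, so the two graphs are identical. -/
/-- Perfect feedback case: with binary innovation indicators (`aij = 1`, `akl = 1`,
and `ail, akj ∈ {0,1}`), packet erasure probabilities `pi, pk ∈ [0,1)` and finish
complements `fi, fk ∈ (0,1]`, the LG-IDNC connectivity condition C2,
`D(j⊕l) ≤ min (D(j)) (D(l))`, holds if and only if `ail = 0` and `akj = 0`, i.e. it
coincides with the G-IDNC connectivity condition, so the two graphs are identical. -/
theorem lgidnc_eq_gidnc_perfect_feedback
    (pi pk fi fk aij ail akj akl : ℝ)
    (hpi : pi ∈ Set.Ico (0:ℝ) 1) (hpk : pk ∈ Set.Ico (0:ℝ) 1)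
    (hfi : fi ∈ Set.Ioc (0:ℝ) 1) (hfk : fk ∈ Set.Ioc (0:ℝ) 1)
    (haij : aij ∈ ({0, 1} : Set ℝ)) (hail : ail ∈ ({0, 1} : Set ℝ))
    (hakj : akj ∈ ({0, 1} : Set ℝ)) (hakl : akl ∈ ({0, 1} : Set ℝ))
    (hij : aij = 1) (hkl : akl = 1) :
    ((1 - pi) * (aij * ail + (1 - aij) * (1 - ail)) * fi
        + (1 - pk) * (akj * akl + (1 - akj) * (1 - akl)) * fk
      ≤ min ((1 - pi) * (1 - aij) * fi + (1 - pk) * (1 - akj) * fk)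
            ((1 - pi) * (1 - ail) * fi + (1 - pk) * (1 - akl) * fk))
      ↔ (ail = 0 ∧ akj = 0) := by
  subst hij hkl
  obtain ⟨hpi0, hpi1⟩ := hpi
  obtain ⟨hpk0, hpk1⟩ := hpk
  obtain ⟨hfi0, hfi1⟩ := hfi
  obtain ⟨hfk0, hfk1⟩ := hfk
  have hi : 0 < (1 - pi) * fi := by nlinarith
  have hk : 0 < (1 - pk) * fk := by nlinarith
  rcases hail with h1 | h1 <;> rcases hakj with h2 | h2 <;>
    subst h1 <;> subst h2 <;>
    simp [le_min_iff]
  all_goals first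
    | (constructor <;> intro h <;> nlinarith)
    | (intro h; nlinarith)
    | nlinarith
    | (constructor <;> nlinarith)
end
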